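/- The symmetric W-function W^S_{2,0}(α₁,α₂) equals 1 + α₁ + α₂ + 4α₁α₂, i.e. 1 + c₁ + 4c₂ in elementary symmetric polynomials. -/
import Mathlib


open Finset

noncomputable section

/-- The field of rational functions `ℚ(α₁, α₂)`. -/
abbrev F2 := FractionRing (MvPolynomial (Fin 2) ℚ)

/-- The variables `α i` as elements of `ℚ(α₁, α₂)`. -/
def α (i : Fin 2) : F2 := algebraMap (MvPolynomial (Fin 2) ℚ) F2 (MvPolynomial.X i)

/-- The symmetrized rational function `W^S_2(α₁,α₂)`:
`(1/⌊1⌋!) Σ_{τ∈S₂} τ·( (1+α₁+α₂)(α₁+α₂)/(α₁−α₂)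
  · (−α₂)(1+2α₁)(1−α₁+α₂)/((α₁+α₂)(1+α₁+α₂)) )`. -/
def WS2 : F2 :=
  (1 / ((Nat.factorial 1 : ℕ) : F2)) *
    ∑ τ : Equiv.Perm (Fin 2),
      ((1 + α (τ 0) + α (τ 1)) * (α (τ 0) + α (τ 1)) / (α (τ 0) - α (τ 1))) *
        ((-α (τ 1)) * (1 + 2 * α (τ 0)) * (1 - α (τ 0) + α (τ 1)) /
          ((α (τ 0) + α (τ 1)) * (1 + α (τ 0) + α (τ 1))))

lemma map_ne_zero_of_eval {p : MvPolynomial (Fin 2) ℚ} (v : Fin 2 → ℚ)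
    (h : MvPolynomial.eval v p ≠ 0) :
    algebraMap (MvPolynomial (Fin 2) ℚ) F2 p ≠ 0 := by
  intro hp
  apply h
  have hinj := IsFractionRing.injective (MvPolynomial (Fin 2) ℚ) F2
  have : p = 0 := hinj (by simpa using hp)
  simp [this]

/-- `W^S_{2,0}(α₁,α₂) = W^S_2(α₁,α₂) = 1 + α₁ + α₂ + 4α₁α₂ = 1 + c₁ + 4c₂`. -/
theorem WS20_value : WS2 = 1 + α 0 + α 1 + 4 * (α 0 * α 1) := by
  have huniv : (univ : Finset (Equiv.Perm (Fin 2))) = {1, Equiv.swap 0 1} := by decide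
  have hne : α 0 - α 1 ≠ 0 := by
    have := map_ne_zero_of_eval (p := MvPolynomial.X 0 - MvPolynomial.X 1) ![1,2] (by norm_num)
    simpa [α, map_sub] using this
  have hne' : α 1 - α 0 ≠ 0 := by
    exact sub_ne_zero.mpr (Ne.symm (sub_ne_zero.mp hne))
  have hsum : α 0 + α 1 ≠ 0 := by
    have := map_ne_zero_of_eval (p := MvPolynomial.X 0 + MvPolynomial.X 1) ![1,2] (by norm_num)
    simpa [α, map_add] using this
  have hone : (1 : F2) + α 0 + α 1 ≠ 0 := by
    have := map_ne_zero_of_eval (p := 1 + MvPolynomial.X 0 + MvPolynomial.X 1) ![1,2] (by norm_num)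
    simpa [α, map_add] using this
  have hone' : (1 : F2) + α 1 + α 0 ≠ 0 := by
    rw [add_right_comm]; exact hone
  have hsum' : α 1 + α 0 ≠ 0 := by rw [add_comm]; exact hsum
  rw [WS2, huniv]
  rw [Finset.sum_insert (by decide), Finset.sum_singleton]
  simp only [Equiv.Perm.one_apply, Equiv.swap_apply_left, Equiv.swap_apply_right]
  rw [Nat.factorial]
  field_simp
  ring

end
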